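/- Fix r ∈ ℝ with r ≠ 0. There exist constants c > 0 and T₀ ≥ 2 (depending only on r) such that for every T ≥ T₀ and every T₁ with T ≤ T₁ ≤ T², the quantity D(T₁,T) = 2^{iT−3/2} · Γ((ir+iT+1/2)/2) · Γ(1/2) · Γ(−ir) · (1+T₁²)^{(−ir−iT−1/2)/2} / Γ((−ir−iT+1/2)/2) satisfies |D(T₁,T)| ≥ c·T^{−1}. -/

import Mathlib

open Real

theorem stmt15 (r : ℝ) (hr : r ≠ 0) :
    ∃ c > (0 : ℝ), ∃ T₀ : ℝ, 2 ≤ T₀ ∧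
      ∀ T : ℝ, T₀ ≤ T → ∀ T₁ : ℝ, T ≤ T₁ → T₁ ≤ T ^ 2 →
        c * T⁻¹ ≤
          ‖(2 : ℂ) ^ (Complex.I * T - 3 / 2) *
              Complex.Gamma ((Complex.I * r + Complex.I * T + 1 / 2) / 2) *
              Complex.Gamma (1 / 2) * Complex.Gamma (-Complex.I * r) *
              ((1 + T₁ ^ 2 : ℝ) : ℂ) ^ ((-Complex.I * r - Complex.I * T - 1 / 2) / 2) /
              Complex.Gamma ((-Complex.I * r - Complex.I * T + 1 / 2) / 2)‖ := by
  have hγ : Complex.Gamma (-Complex.I * r) ≠ 0 := by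
    apply Complex.Gamma_ne_zero
    intro m h
    apply hr
    have := congrArg Complex.im h
    simpa using this
  have hγ' : (0:ℝ) < ‖Complex.Gamma (-Complex.I * r)‖ := norm_pos_iff.2 hγ
  refine ⟨Real.sqrt π * ‖Complex.Gamma (-Complex.I * r)‖ * (2:ℝ) ^ (-(3/2):ℝ) *
    (2:ℝ) ^ (-(1/4):ℝ),
    by
      have := Real.sqrt_pos.2 Real.pi_pos
      positivity, 2, le_refl 2, ?_⟩
  intro T hT T₁ h1 h2
  have hT0 : (0:ℝ) < T := by linarith
  set z : ℂ := (Complex.I * r + Complex.I * T + 1 / 2) / 2 with hz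
  have hΓz : Complex.Gamma z ≠ 0 := by
    apply Complex.Gamma_ne_zero_of_re_pos
    simp [hz, Complex.div_re]
  have hconj : (-Complex.I * r - Complex.I * T + 1/2)/2 = starRingEnd ℂ z := by
    simp only [hz, map_div₀, map_add, map_mul, map_sub, Complex.conj_I,
      Complex.conj_ofReal, map_one, map_ofNat]
    ring
  have hnorm1 : ‖(2 : ℂ) ^ (Complex.I * T - 3 / 2)‖ = (2:ℝ) ^ (-(3/2):ℝ) := by
    rw [show (2:ℂ) = ((2:ℝ):ℂ) by norm_num,
      Complex.norm_cpow_eq_rpow_re_of_pos (by norm_num)]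
    norm_num
  have hpos : (0:ℝ) < 1 + T₁ ^ 2 := by positivity
  have hnorm2 : ‖((1 + T₁ ^ 2 : ℝ) : ℂ) ^ ((-Complex.I * r - Complex.I * T - 1 / 2) / 2)‖
      = (1 + T₁ ^ 2) ^ (-(1/4):ℝ) := by
    rw [Complex.norm_cpow_eq_rpow_re_of_pos hpos]
    norm_num
  have hnorm3 : ‖Complex.Gamma (1/2 : ℂ)‖ = Real.sqrt π := by
    rw [Complex.Gamma_one_half_eq,
      Complex.norm_cpow_eq_rpow_re_of_pos Real.pi_pos, Real.sqrt_eq_rpow]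
    norm_num
  rw [hconj, Complex.Gamma_conj, norm_div, norm_mul, norm_mul, norm_mul, norm_mul,
    RCLike.norm_conj, hnorm1, hnorm2, hnorm3]
  have hΓz' : (0:ℝ) < ‖Complex.Gamma z‖ := norm_pos_iff.2 hΓz
  have key : (2:ℝ) ^ (-(1/4):ℝ) * T⁻¹ ≤ (1 + T₁ ^ 2) ^ (-(1/4):ℝ) := by
    have h4 : 1 + T₁ ^ 2 ≤ 2 * T ^ 4 := by nlinarith
    have e1 : ((2 * T ^ 4 : ℝ)) ^ (-(1/4):ℝ) = (2:ℝ) ^ (-(1/4):ℝ) * T⁻¹ := by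
      rw [Real.mul_rpow (by norm_num) (by positivity)]
      congr 1
      rw [← Real.rpow_natCast T 4, ← Real.rpow_mul hT0.le, ← Real.rpow_neg_one]
      norm_num
    rw [← e1]
    exact Real.rpow_le_rpow_of_nonpos (by positivity) h4 (by norm_num)
  calc Real.sqrt π * ‖Complex.Gamma (-Complex.I * r)‖ * (2:ℝ) ^ (-(3/2):ℝ) *
        (2:ℝ) ^ (-(1/4):ℝ) * T⁻¹
      = Real.sqrt π * ‖Complex.Gamma (-Complex.I * r)‖ * (2:ℝ) ^ (-(3/2):ℝ) *
        ((2:ℝ) ^ (-(1/4):ℝ) * T⁻¹) := by ring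
    _ ≤ Real.sqrt π * ‖Complex.Gamma (-Complex.I * r)‖ * (2:ℝ) ^ (-(3/2):ℝ) *
        ((1 + T₁ ^ 2) ^ (-(1/4):ℝ)) := by
        refine mul_le_mul_of_nonneg_left key ?_
        positivity
    _ = (2:ℝ) ^ (-(3/2):ℝ) * ‖Complex.Gamma z‖ * Real.sqrt π *
          ‖Complex.Gamma (-Complex.I * r)‖ * (1 + T₁ ^ 2) ^ (-(1/4):ℝ) /
          ‖Complex.Gamma z‖ := by
        rw [eq_div_iff hΓz'.ne']
        ring
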